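/- Let d ≥ 1 and N ≥ 1 be integers, and for each i ∈ {0, 1, …, N−1}^d let C_i denote the half-open grid cube ∏_{k=1}^d [i_k/N, (i_k+1)/N) ⊆ ℝ^d. Let P₁ and P₂ be subsets of [0,1)^d such that for every i ∈ {0, 1, …, N−1}^d both P₁ ∩ C_i and P₂ ∩ C_i are nonempty. Define the bipartite geometric graph G on the vertex set P₁ ∪ P₂ in which two distinct vertices x and y are adjacent if and only if one of them belongs to P₁, the other belongs to P₂, and their Euclidean distance satisfies |x − y| ≤ 2·√d/N. Then G is connected. -/

import Mathlib

/-- The bipartite geometric graph on `P₁ ∪ P₂ ⊆ ℝ^d`: two distinct vertices are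
adjacent iff one belongs to `P₁`, the other to `P₂`, and their Euclidean distance
is at most `2 √d / N`. -/
def bipartiteGeometricGraph (d N : ℕ) (P₁ P₂ : Set (EuclideanSpace ℝ (Fin d))) :
    SimpleGraph ↥(P₁ ∪ P₂) where
  Adj x y := x ≠ y ∧
    (((x : EuclideanSpace ℝ (Fin d)) ∈ P₁ ∧ (y : EuclideanSpace ℝ (Fin d)) ∈ P₂) ∨
      ((x : EuclideanSpace ℝ (Fin d)) ∈ P₂ ∧ (y : EuclideanSpace ℝ (Fin d)) ∈ P₁)) ∧
    dist (x : EuclideanSpace ℝ (Fin d)) (y : EuclideanSpace ℝ (Fin d)) ≤ 2 * Real.sqrt d / N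
  symm := by
    constructor
    rintro x y ⟨hxy, hmem, hdist⟩
    exact ⟨hxy.symm, hmem.elim (fun h => Or.inr ⟨h.2, h.1⟩) (fun h => Or.inl ⟨h.2, h.1⟩),
      by rwa [dist_comm]⟩
  loopless := by
    constructor
    rintro x ⟨hx, -⟩
    exact hx rfl

def bggInCube {d : ℕ} (N : ℕ) (i : Fin d → Fin N) (p : EuclideanSpace ℝ (Fin d)) : Prop :=
  ∀ k, p k ∈ Set.Ico ((i k : ℝ) / N) (((i k : ℝ) + 1) / N)

lemma bgg_dist_le {d N : ℕ} (hN : 1 ≤ N) {i j : Fin d → Fin N}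
    (hij : ∀ k, |(i k : ℤ) - (j k : ℤ)| ≤ 1)
    {p q : EuclideanSpace ℝ (Fin d)} (hp : bggInCube N i p) (hq : bggInCube N j q) :
    dist p q ≤ 2 * Real.sqrt d / N := by
  have hN0 : (0:ℝ) < N := by exact_mod_cast hN
  have key : ∀ k, |p k - q k| ≤ 2 / N := by
    intro k
    have hij' := hij k
    rw [abs_sub_le_iff] at hij'
    obtain ⟨ha, hb⟩ := hij'
    have hij1 : (i k : ℝ) ≤ (j k : ℝ) + 1 := by exact_mod_cast by linarith
    have hij2 : (j k : ℝ) ≤ (i k : ℝ) + 1 := by exact_mod_cast by linarith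
    have hpu := (hp k).2; have hpl := (hp k).1
    have hqu := (hq k).2; have hql := (hq k).1
    have e1 : ((i k:ℝ)+1)/N - (j k:ℝ)/N ≤ 2/N := by
      rw [div_sub_div_same]; gcongr; linarith
    have e2 : ((j k:ℝ)+1)/N - (i k:ℝ)/N ≤ 2/N := by
      rw [div_sub_div_same]; gcongr; linarith
    rw [abs_sub_le_iff]
    constructor <;> linarith
  have hsum : ∑ k, dist (p k) (q k) ^ 2 ≤ (d : ℝ) * (2/N)^2 := by
    calc ∑ k, dist (p k) (q k) ^ 2 ≤ ∑ _k : Fin d, ((2:ℝ)/N)^2 := by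
          apply Finset.sum_le_sum
          intro k _
          have : dist (p k) (q k) ≤ 2/N := by rw [Real.dist_eq]; exact key k
          exact pow_le_pow_left₀ dist_nonneg this 2
      _ = (d : ℝ) * (2/N)^2 := by simp
  calc dist p q = Real.sqrt (∑ k, dist (p k) (q k) ^ 2) := EuclideanSpace.dist_eq p q
    _ ≤ Real.sqrt ((d : ℝ) * (2/N)^2) := Real.sqrt_le_sqrt hsum
    _ = Real.sqrt d * (2/N) := by
        rw [Real.sqrt_mul (by positivity), Real.sqrt_sq (by positivity)]
    _ = 2 * Real.sqrt d / N := by ring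

/-- Deterministic core of the connectivity theorem (Theorem 1): if every grid cube
of side `1/N` of the unit cube contains a point of `P₁` and a point of `P₂`, the
bipartite geometric graph with threshold `2 √d / N` is connected. -/
theorem bipartiteGeometricGraph_connected (d N : ℕ) (hd : 1 ≤ d) (hN : 1 ≤ N)
    (P₁ P₂ : Set (EuclideanSpace ℝ (Fin d)))
    (hP₁cube : ∀ p ∈ P₁, ∀ k, p k ∈ Set.Ico (0 : ℝ) 1)
    (hP₂cube : ∀ p ∈ P₂, ∀ k, p k ∈ Set.Ico (0 : ℝ) 1)
    (h₁ : ∀ i : Fin d → Fin N, ∃ p ∈ P₁,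
      ∀ k, p k ∈ Set.Ico ((i k : ℝ) / N) (((i k : ℝ) + 1) / N))
    (h₂ : ∀ i : Fin d → Fin N, ∃ p ∈ P₂,
      ∀ k, p k ∈ Set.Ico ((i k : ℝ) / N) (((i k : ℝ) + 1) / N)) :
    (bipartiteGeometricGraph d N P₁ P₂).Connected := by
  classical
  haveI : NeZero N := ⟨Nat.one_le_iff_ne_zero.mp hN⟩
  have hN0 : (0:ℝ) < N := by exact_mod_cast hN
  set G := bipartiteGeometricGraph d N P₁ P₂ with hG
  choose a₁ ha₁P ha₁c using h₁
  choose a₂ ha₂P ha₂c using h₂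
  let v₁ : (Fin d → Fin N) → ↥(P₁ ∪ P₂) := fun i => ⟨a₁ i, Or.inl (ha₁P i)⟩
  let v₂ : (Fin d → Fin N) → ↥(P₁ ∪ P₂) := fun i => ⟨a₂ i, Or.inr (ha₂P i)⟩
  -- basic reachability between P₁ point and P₂ point in adjacent cubes
  have reach : ∀ (x y : ↥(P₁ ∪ P₂)) (i j : Fin d → Fin N),
      (∀ k, |(i k : ℤ) - (j k : ℤ)| ≤ 1) →
      (x : EuclideanSpace ℝ (Fin d)) ∈ P₁ → bggInCube N i x →
      (y : EuclideanSpace ℝ (Fin d)) ∈ P₂ → bggInCube N j y →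
      G.Reachable x y := by
    intro x y i j hij hx hxc hy hyc
    by_cases hxy : x = y
    · exact hxy ▸ SimpleGraph.Reachable.refl x
    · exact SimpleGraph.Adj.reachable
        ⟨hxy, Or.inl ⟨hx, hy⟩, bgg_dist_le hN hij hxc hyc⟩
  have hself : ∀ i : Fin d → Fin N, ∀ k, |(i k : ℤ) - (i k : ℤ)| ≤ 1 := by
    intro i k; simp
  -- main induction: every v₁ i is reachable from v₁ 0
  have main : ∀ n (i : Fin d → Fin N), (∑ k, (i k : ℕ)) = n →
      G.Reachable (v₁ i) (v₁ fun _ => 0) := by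
    intro n
    induction n using Nat.strong_induction_on with
    | _ n ih =>
      intro i hi
      by_cases h0 : ∀ k, (i k : ℕ) = 0
      · have : i = fun _ => 0 := funext fun k => Fin.ext (h0 k)
        rw [this]
      · push_neg at h0
        obtain ⟨k, hk⟩ := h0
        have hkpos : 0 < (i k : ℕ) := Nat.pos_of_ne_zero hk
        let j : Fin d → Fin N := Function.update i k ⟨(i k : ℕ) - 1, lt_of_le_of_lt (Nat.sub_le _ _) (i k).isLt⟩
        have hjk : (j k : ℕ) = (i k : ℕ) - 1 := by simp [j]
        have hjl : ∀ l, l ≠ k → j l = i l := fun l hl => Function.update_of_ne hl _ _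
        have hij : ∀ l, |(i l : ℤ) - (j l : ℤ)| ≤ 1 := by
          intro l
          by_cases hl : l = k
          · subst hl
            rw [hjk, abs_sub_le_iff]
            constructor <;> · push_cast [Nat.cast_sub hkpos]; omega
          · rw [hjl l hl]; simp
        have r1 : G.Reachable (v₁ i) (v₂ j) :=
          reach _ _ i j hij (ha₁P i) (ha₁c i) (ha₂P j) (ha₂c j)
        have r2 : G.Reachable (v₁ j) (v₂ j) :=
          reach _ _ j j (hself j) (ha₁P j) (ha₁c j) (ha₂P j) (ha₂c j)
        have hsum : (∑ l, (j l : ℕ)) < n := by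
          rw [← hi]
          apply Finset.sum_lt_sum
          · intro l _
            by_cases hl : l = k
            · subst hl; omega
            · rw [hjl l hl]
          · exact ⟨k, Finset.mem_univ k, by omega⟩
        exact (r1.trans r2.symm).trans (ih _ hsum j rfl)
  -- index of an arbitrary point of the unit cube
  have hidx : ∀ p : EuclideanSpace ℝ (Fin d), (∀ k, p k ∈ Set.Ico (0:ℝ) 1) →
      ∃ i : Fin d → Fin N, bggInCube N i p := by
    intro p hp
    refine ⟨fun k => ⟨(⌊(N : ℝ) * p k⌋).toNat, ?_⟩, ?_⟩
    · have h1 : (N : ℝ) * p k < N := by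
        have := (hp k).2
        nlinarith
      have h2 : ⌊(N : ℝ) * p k⌋ < (N : ℤ) := by
        exact_mod_cast Int.floor_lt.mpr (by exact_mod_cast h1)
      have h0 : 0 ≤ ⌊(N : ℝ) * p k⌋ := Int.floor_nonneg.mpr (mul_nonneg hN0.le (hp k).1)
      omega
    · intro k
      have h0 : 0 ≤ (N:ℝ) * p k := mul_nonneg (le_of_lt hN0) (hp k).1
      have h0' : 0 ≤ ⌊(N : ℝ) * p k⌋ := Int.floor_nonneg.mpr h0
      have hcast : ((⌊(N : ℝ) * p k⌋.toNat : ℕ) : ℝ) = (⌊(N : ℝ) * p k⌋ : ℝ) := by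
        exact_mod_cast Int.toNat_of_nonneg h0'
      constructor
      · rw [div_le_iff₀ hN0]
        simp only [hcast]
        calc ((⌊(N : ℝ) * p k⌋ : ℝ)) ≤ (N : ℝ) * p k := Int.floor_le _
          _ = p k * N := by ring
      · rw [lt_div_iff₀ hN0]
        simp only [hcast]
        calc p k * N = (N : ℝ) * p k := by ring
          _ < ⌊(N : ℝ) * p k⌋ + 1 := Int.lt_floor_add_one _
  -- conclude
  rw [SimpleGraph.connected_iff]
  refine ⟨?_, ⟨v₁ fun _ => 0⟩⟩
  · intro x y
    suffices h : ∀ z : ↥(P₁ ∪ P₂), G.Reachable z (v₁ fun _ => 0) by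
      exact (h x).trans (h y).symm
    intro z
    rcases z.2 with hz | hz
    · obtain ⟨i, hi⟩ := hidx z (hP₁cube z hz)
      have r1 : G.Reachable z (v₂ i) := reach _ _ i i (hself i) hz hi (ha₂P i) (ha₂c i)
      have r2 : G.Reachable (v₁ i) (v₂ i) :=
        reach _ _ i i (hself i) (ha₁P i) (ha₁c i) (ha₂P i) (ha₂c i)
      exact (r1.trans r2.symm).trans (main _ i rfl)
    · obtain ⟨i, hi⟩ := hidx z (hP₂cube z hz)
      have r1 : G.Reachable (v₁ i) z := reach _ _ i i (hself i) (ha₁P i) (ha₁c i) hz hi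
      exact r1.symm.trans (main _ i rfl)
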